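/- For every integer n ≥ 1 and every t ∈ ℝ, ∑_{k=0}^n C_k^n · t^k = A_n(t); that is, the two expressions ∑_{k=0}^n cos((n−k)π/2)·k^n / ((n−k)!!·(n+k)!!) · t^k and ((−1)^n/n!) · ∑_{k=0}^{⌊n/2⌋} (−1)^k · binom(n,k) · (k − n/2)^n · t^{n−2k} are equal. -/

import Mathlib

/-- The polynomial `A_n(t) = ((−1)^n/n!) ∑_{k=0}^{⌊n/2⌋} (−1)^k C(n,k) (k − n/2)^n t^{n−2k}`,
with the convention `A_0 ≡ 0` (negative indices are handled by truncated subtraction,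
which is harmless since `A_0 ≡ 0`). -/
noncomputable def A (n : ℕ) (t : ℝ) : ℝ :=
  if n = 0 then 0 else
    ((-1 : ℝ) ^ n / Nat.factorial n) *
      ∑ k ∈ Finset.range (n / 2 + 1),
        (-1 : ℝ) ^ k * (Nat.choose n k) * ((k : ℝ) - n / 2) ^ n * t ^ (n - 2 * k)


open Nat in
/-- `C_k^n = cos((n−k)π/2) kⁿ / ((n−k)‼ (n+k)‼)` for `0 ≤ k ≤ n`. -/
noncomputable def Ccoef (n k : ℕ) : ℝ :=
  Real.cos (((n - k : ℕ) : ℝ) * Real.pi / 2) * (k : ℝ) ^ n /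
    (((n - k)‼ : ℝ) * ((n + k)‼ : ℝ))

lemma cos_even (j : ℕ) : Real.cos (((2*j : ℕ) : ℝ) * Real.pi / 2) = (-1:ℝ)^j := by
  have := Real.cos_nat_mul_pi_sub 0 j
  simp at this
  push_cast
  rw [show (2*(j:ℝ)) * Real.pi / 2 = (j:ℝ) * Real.pi by ring]
  simpa using this

lemma cos_odd (j : ℕ) : Real.cos (((2*j+1 : ℕ) : ℝ) * Real.pi / 2) = 0 := by
  push_cast
  rw [show (2*(j:ℝ)+1) * Real.pi / 2 = (j:ℝ) * Real.pi + Real.pi/2 by ring]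
  rw [Real.cos_add]
  simp [Real.sin_nat_mul_pi]

/-- For every `n ≥ 1` and `t ∈ ℝ`, `∑_{k=0}^n C_k^n t^k = A_n(t)`. -/
theorem C_sum_eq_A (n : ℕ) (hn : 1 ≤ n) (t : ℝ) :
    ∑ k ∈ Finset.range (n + 1), Ccoef n k * t ^ k = A n t := by
  have hn0 : n ≠ 0 := by omega
  rw [A, if_neg hn0]
  rw [← Finset.sum_filter_of_ne (p := fun k => (n - k) % 2 = 0)
    (by
      intro k hk hne
      by_contra hodd
      apply hne
      obtain ⟨j, hj⟩ : ∃ j, n - k = 2*j+1 := ⟨(n-k)/2, by omega⟩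
      unfold Ccoef
      rw [hj, cos_odd]
      simp)]
  rw [Finset.sum_nbij' (i := fun k => (n - k)/2) (j := fun j => n - 2*j)
    (g := fun j => Ccoef n (n - 2*j) * t ^ (n - 2*j))
    (by intro a ha
        have h1 := Finset.mem_range.mp (Finset.mem_filter.mp ha).1
        have h2 : (n - a) % 2 = 0 := (Finset.mem_filter.mp ha).2
        show (n - a)/2 ∈ Finset.range (n/2+1)
        exact Finset.mem_range.mpr (by omega))
    (by intro a ha
        have ha' := Finset.mem_range.mp ha
        show n - 2*a ∈ Finset.filter (fun k => (n-k)%2=0) (Finset.range (n+1))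
        refine Finset.mem_filter.mpr ⟨Finset.mem_range.mpr (by omega), ?_⟩
        show (n - (n - 2*a)) % 2 = 0
        omega)
    (by intro a ha
        have h1 := Finset.mem_range.mp (Finset.mem_filter.mp ha).1
        have h2 : (n - a) % 2 = 0 := (Finset.mem_filter.mp ha).2
        show n - 2*((n - a)/2) = a
        omega)
    (by intro a ha
        have ha' := Finset.mem_range.mp ha
        show (n - (n - 2*a))/2 = a
        omega)
    (by intro a ha
        have h1 := Finset.mem_range.mp (Finset.mem_filter.mp ha).1
        have h2 : (n - a) % 2 = 0 := (Finset.mem_filter.mp ha).2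
        have hEq : n - 2*((n - a)/2) = a := by omega
        show Ccoef n a * t ^ a = Ccoef n (n - 2*((n-a)/2)) * t ^ (n - 2*((n-a)/2))
        rw [hEq])]
  rw [Finset.mul_sum]
  refine Finset.sum_congr rfl ?_
  intro j hj
  simp only [Finset.mem_range] at hj
  have h2j : 2*j ≤ n := by omega
  have hsub : n - (n - 2*j) = 2*j := by omega
  have hadd : n + (n - 2*j) = 2*(n - j) := by omega
  unfold Ccoef
  rw [hsub, hadd, cos_even, Nat.doubleFactorial_two_mul, Nat.doubleFactorial_two_mul]
  have hcast : ((j:ℝ) - (n:ℝ)/2) = -(((n - 2*j : ℕ) : ℝ))/2 := by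
    rw [Nat.cast_sub h2j]; push_cast; ring
  have hjn : j ≤ n := by omega
  have hchoose : (n.choose j : ℝ) = (n.factorial : ℝ) / ((j.factorial : ℝ) * ((n-j).factorial : ℝ)) := by
    rw [Nat.choose_eq_factorial_div_factorial hjn]
    rw [Nat.cast_div (Nat.factorial_mul_factorial_dvd_factorial hjn) (by positivity), Nat.cast_mul]
  have hnf : (n.factorial : ℝ) ≠ 0 := by positivity
  have hjf : (j.factorial : ℝ) ≠ 0 := by positivity
  have hnjf : ((n-j).factorial : ℝ) ≠ 0 := by positivity
  rw [hcast, hchoose, div_pow]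
  have h2 : (2:ℝ)^(n-j) = 2^n / 2^j := by
    rw [eq_div_iff (by positivity : (2:ℝ)^j ≠ 0), ← pow_add]
    congr 1; omega
  push_cast
  rw [h2]
  rcases Nat.even_or_odd n with hpar | hpar
  · rw [hpar.neg_pow (((n - 2*j : ℕ) : ℝ)), hpar.neg_one_pow]; field_simp
  · rw [hpar.neg_pow (((n - 2*j : ℕ) : ℝ)), hpar.neg_one_pow]; field_simp
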